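/- Let A be an n×n real matrix with all entries positive and let x ∈ ℝ^n have all entries positive. If A^r x is not a Perron vector of A for every integer r ≥ 0, then the sequence (a_k(A,x))_{k≥1} is strictly decreasing, the sequence (b_k(A,x))_{k≥1} is strictly increasing, and both sequences converge to the Perron value ρ(A). -/

import Mathlib

open Matrix Filter

/-- The Perron value (spectral radius) of a real square matrix: the supremum of the
absolute values of its complex eigenvalues (roots of the characteristic polynomial). -/
noncomputable def perronValue {n : ℕ} (A : Matrix (Fin n) (Fin n) ℝ) : ℝ :=
  sSup {r : ℝ | ∃ μ : ℂ, ((A.map Complex.ofReal).charpoly).IsRoot μ ∧ r = ‖μ‖}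

/-- A Perron vector of `A`: an eigenvector associated with the Perron value of `A`. -/
def IsPerronVector {n : ℕ} (A : Matrix (Fin n) (Fin n) ℝ) (x : Fin n → ℝ) : Prop :=
  x ≠ 0 ∧ A.mulVec x = perronValue A • x

/-- `a_k(A,x) = max_i (A^k x)_i / (A^{k-1} x)_i` for `k ≥ 1`. -/
noncomputable def aSeq {n : ℕ} (A : Matrix (Fin n) (Fin n) ℝ) (x : Fin n → ℝ) (k : ℕ) : ℝ :=
  ⨆ i, ((A ^ k).mulVec x i) / ((A ^ (k - 1)).mulVec x i)

/-- `b_k(A,x) = min_i (A^k x)_i / (A^{k-1} x)_i` for `k ≥ 1`. -/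
noncomputable def bSeq {n : ℕ} (A : Matrix (Fin n) (Fin n) ℝ) (x : Fin n → ℝ) (k : ℕ) : ℝ :=
  ⨅ i, ((A ^ k).mulVec x i) / ((A ^ (k - 1)).mulVec x i)

lemma eval_charpoly' {n : ℕ} (M : Matrix (Fin n) (Fin n) ℂ) (μ : ℂ) :
    M.charpoly.eval μ = (μ • (1 : Matrix (Fin n) (Fin n) ℂ) - M).det := by
  rw [Matrix.charpoly, ← Polynomial.coe_evalRingHom, RingHom.map_det]
  congr 1
  ext i j
  by_cases h : i = j
  · subst h; simp [charmatrix_apply_eq, Matrix.one_apply]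
  · simp [charmatrix_apply_ne _ _ _ h, Matrix.one_apply, h]

lemma isRoot_charpoly_iff {n : ℕ} (M : Matrix (Fin n) (Fin n) ℂ) (μ : ℂ) :
    M.charpoly.IsRoot μ ↔ ∃ v : Fin n → ℂ, v ≠ 0 ∧ M.mulVec v = μ • v := by
  rw [Polynomial.IsRoot, eval_charpoly', ← Matrix.exists_mulVec_eq_zero_iff]
  constructor
  · rintro ⟨v, hv, h⟩
    refine ⟨v, hv, ?_⟩
    rw [Matrix.sub_mulVec, Matrix.smul_mulVec, Matrix.one_mulVec, sub_eq_zero] at h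
    exact h.symm
  · rintro ⟨v, hv, h⟩
    refine ⟨v, hv, ?_⟩
    rw [Matrix.sub_mulVec, Matrix.smul_mulVec, Matrix.one_mulVec, sub_eq_zero, h]

section
variable {n : ℕ}

/-- Collatz upper bound: every eigenvalue modulus is at most `max (Ay)_i/y_i`. -/
lemma abs_root_le {A : Matrix (Fin n) (Fin n) ℝ} (hA : ∀ i j, 0 < A i j)
    {y : Fin n → ℝ} (hy : ∀ i, 0 < y i) {a : ℝ} (hay : ∀ i, A.mulVec y i ≤ a * y i)
    {μ : ℂ} (hμ : ((A.map Complex.ofReal).charpoly).IsRoot μ) : ‖μ‖ ≤ a := by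
  obtain ⟨v, hv0, hv⟩ := (isRoot_charpoly_iff _ μ).mp hμ
  haveI : Nonempty (Fin n) := by
    rcases Function.ne_iff.mp hv0 with ⟨j, _⟩; exact ⟨j⟩
  obtain ⟨i0, hi0⟩ := Finite.exists_max (fun i => ‖v i‖ / y i)
  set c := ‖v i0‖ / y i0 with hc
  have hcpos : 0 < c := by
    rcases Function.ne_iff.mp hv0 with ⟨j, hj⟩
    have : 0 < ‖v j‖ / y j :=
      div_pos (by simpa using (norm_pos_iff.mpr hj)) (hy j)
    exact lt_of_lt_of_le this (hi0 j)
  have hvb : ∀ j, ‖v j‖ ≤ c * y j := fun j =>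
    (div_le_iff₀ (hy j)).mp (hi0 j)
  have hvi0 : ‖v i0‖ = c * y i0 := by
    rw [hc, div_mul_cancel₀]
    exact (hy i0).ne'
  have key : ‖μ‖ * ‖v i0‖ ≤ a * ‖v i0‖ := by
    have h1 : μ * v i0 = (A.map Complex.ofReal).mulVec v i0 := by
      rw [hv]; simp [Pi.smul_apply]
    have h2 : (A.map Complex.ofReal).mulVec v i0 = ∑ j, (A i0 j : ℂ) * v j := by
      simp [Matrix.mulVec, dotProduct, Matrix.map_apply]
    calc ‖μ‖ * ‖v i0‖
        = ‖∑ j, (A i0 j : ℂ) * v j‖ := by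
          rw [← norm_mul, h1, h2]
      _ ≤ ∑ j, ‖(A i0 j : ℂ) * v j‖ := norm_sum_le _ _
      _ = ∑ j, A i0 j * ‖v j‖ := by
          refine Finset.sum_congr rfl fun j _ => ?_
          rw [norm_mul, Complex.norm_real, Real.norm_eq_abs, abs_of_pos (hA i0 j)]
      _ ≤ ∑ j, A i0 j * (c * y j) := by
          refine Finset.sum_le_sum fun j _ => ?_
          exact mul_le_mul_of_nonneg_left (hvb j) (hA i0 j).le
      _ = c * A.mulVec y i0 := by
          simp only [Matrix.mulVec, dotProduct, Finset.mul_sum]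
          exact Finset.sum_congr rfl fun j _ => by ring
      _ ≤ c * (a * y i0) := mul_le_mul_of_nonneg_left (hay i0) hcpos.le
      _ = a * (c * y i0) := by ring
      _ = a * ‖v i0‖ := by rw [hvi0]
  exact le_of_mul_le_mul_right key (hvi0 ▸ mul_pos hcpos (hy i0))

/-- A positive eigenvector pins down the Perron value. -/
lemma mulVec_map_ofReal (A : Matrix (Fin n) (Fin n) ℝ) (y : Fin n → ℝ) (i : Fin n) :
    (A.map Complex.ofReal).mulVec (fun j => (y j : ℂ)) i = ((A.mulVec y i : ℝ) : ℂ) := by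
  simp only [Matrix.mulVec, dotProduct, Matrix.map_apply]
  norm_cast

lemma perron_eq_of_eig (hn : 0 < n) {A : Matrix (Fin n) (Fin n) ℝ} (hA : ∀ i j, 0 < A i j)
    {y : Fin n → ℝ} (hy : ∀ i, 0 < y i) {lam : ℝ} (hlam : 0 < lam)
    (heq : A.mulVec y = lam • y) : perronValue A = lam := by
  haveI : Nonempty (Fin n) := Fin.pos_iff_nonempty.mp hn
  have hmem : lam ∈ {r : ℝ | ∃ μ : ℂ, ((A.map Complex.ofReal).charpoly).IsRoot μ ∧ r = ‖μ‖} := by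
    refine ⟨(lam : ℂ), ?_, by simp [Complex.norm_real, abs_of_pos hlam]⟩
    rw [isRoot_charpoly_iff]
    refine ⟨fun i => (y i : ℂ), ?_, ?_⟩
    · intro h
      have := congrFun h (Classical.arbitrary (Fin n))
      simp only [Pi.zero_apply, Complex.ofReal_eq_zero] at this
      exact (hy _).ne' this
    · ext i
      have h0 := congrFun heq i
      simp only [Pi.smul_apply, smul_eq_mul] at h0
      rw [mulVec_map_ofReal, h0]
      simp [Complex.ofReal_mul]
  have hub : ∀ r ∈ {r : ℝ | ∃ μ : ℂ, ((A.map Complex.ofReal).charpoly).IsRoot μ ∧ r = ‖μ‖}, r ≤ lam := by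
    rintro r ⟨μ, hμ, rfl⟩
    exact abs_root_le hA hy (fun i => (congrFun heq i).le.trans (by simp [Pi.smul_apply])) hμ
  exact le_antisymm (csSup_le ⟨lam, hmem⟩ hub) (le_csSup ⟨lam, hub⟩ hmem)

/-- The Perron value is at most `max (Ay)_i/y_i` for any positive `y`. -/
lemma perron_le (hn : 0 < n) {A : Matrix (Fin n) (Fin n) ℝ} (hA : ∀ i j, 0 < A i j)
    {y : Fin n → ℝ} (hy : ∀ i, 0 < y i) {a : ℝ} (hay : ∀ i, A.mulVec y i ≤ a * y i) :
    perronValue A ≤ a := by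
  have hne : ∃ μ : ℂ, ((A.map Complex.ofReal).charpoly).IsRoot μ := by
    apply Complex.exists_root
    have h1 : ((A.map Complex.ofReal).charpoly).natDegree = n := by
      simp [Matrix.charpoly_natDegree_eq_dim]
    rw [Polynomial.degree_eq_natDegree (Polynomial.Monic.ne_zero (Matrix.charpoly_monic _)), h1]
    exact_mod_cast hn
  obtain ⟨μ, hμ⟩ := hne
  refine csSup_le ⟨‖μ‖, μ, hμ, rfl⟩ ?_
  rintro r ⟨ν, hν, rfl⟩
  exact abs_root_le hA hy hay hν
end

section Aux

variable {n : ℕ} (A : Matrix (Fin n) (Fin n) ℝ) (x : Fin n → ℝ)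

noncomputable def yk (k : ℕ) : Fin n → ℝ := (A ^ k).mulVec x
noncomputable def al (k : ℕ) : ℝ := ⨆ i, yk A x (k + 1) i / yk A x k i
noncomputable def be (k : ℕ) : ℝ := ⨅ i, yk A x (k + 1) i / yk A x k i

lemma yk_zero : yk A x 0 = x := by simp [yk]

lemma yk_succ (k : ℕ) : yk A x (k + 1) = A.mulVec (yk A x k) := by
  rw [yk, yk, pow_succ']
  exact (mulVec_mulVec x A (A ^ k)).symm

variable {A x}

lemma mulVec_pos (hn : 0 < n) (hA : ∀ i j, 0 < A i j) {v : Fin n → ℝ}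
    (hv : ∀ i, 0 < v i) (i : Fin n) : 0 < A.mulVec v i := by
  haveI : Nonempty (Fin n) := Fin.pos_iff_nonempty.mp hn
  refine Finset.sum_pos (fun j _ => mul_pos (hA i j) (hv j)) Finset.univ_nonempty

lemma yk_pos (hn : 0 < n) (hA : ∀ i j, 0 < A i j) (hx : ∀ i, 0 < x i) :
    ∀ k i, 0 < yk A x k i := by
  intro k
  induction k with
  | zero => simpa [yk_zero] using hx
  | succ k ih => intro i; rw [yk_succ]; exact mulVec_pos hn hA ih i

section Ratios
variable {n : ℕ} {A : Matrix (Fin n) (Fin n) ℝ} {x : Fin n → ℝ}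

lemma ratio_le_al (k : ℕ) (i : Fin n) :
    yk A x (k + 1) i / yk A x k i ≤ al A x k :=
  le_ciSup (f := fun i => yk A x (k + 1) i / yk A x k i)
    (Set.Finite.bddAbove (Set.finite_range _)) i

lemma be_le_ratio (k : ℕ) (i : Fin n) :
    be A x k ≤ yk A x (k + 1) i / yk A x k i :=
  ciInf_le (f := fun i => yk A x (k + 1) i / yk A x k i)
    (Set.Finite.bddBelow (Set.finite_range _)) i

lemma yk_le_al (hn : 0 < n) (hA : ∀ i j, 0 < A i j) (hx : ∀ i, 0 < x i) (k : ℕ) (i : Fin n) :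
    yk A x (k + 1) i ≤ al A x k * yk A x k i :=
  (div_le_iff₀ (yk_pos hn hA hx k i)).mp (ratio_le_al k i)

lemma be_le_yk (hn : 0 < n) (hA : ∀ i j, 0 < A i j) (hx : ∀ i, 0 < x i) (k : ℕ) (i : Fin n) :
    be A x k * yk A x k i ≤ yk A x (k + 1) i :=
  (le_div_iff₀ (yk_pos hn hA hx k i)).mp (be_le_ratio k i)

lemma al_attained (hn : 0 < n) (k : ℕ) :
    ∃ i, al A x k = yk A x (k + 1) i / yk A x k i := by
  haveI : Nonempty (Fin n) := Fin.pos_iff_nonempty.mp hn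
  obtain ⟨i, hi⟩ := Finite.exists_max (fun i => yk A x (k + 1) i / yk A x k i)
  exact ⟨i, le_antisymm (ciSup_le hi) (ratio_le_al k i)⟩

lemma be_attained (hn : 0 < n) (k : ℕ) :
    ∃ i, be A x k = yk A x (k + 1) i / yk A x k i := by
  haveI : Nonempty (Fin n) := Fin.pos_iff_nonempty.mp hn
  obtain ⟨i, hi⟩ := Finite.exists_min (fun i => yk A x (k + 1) i / yk A x k i)
  exact ⟨i, le_antisymm (be_le_ratio k i) (le_ciInf hi)⟩

lemma be_pos (hn : 0 < n) (hA : ∀ i j, 0 < A i j) (hx : ∀ i, 0 < x i) (k : ℕ) :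
    0 < be A x k := by
  obtain ⟨i, hi⟩ := be_attained (x := x) (A := A) hn k
  rw [hi]
  exact div_pos (yk_pos hn hA hx (k+1) i) (yk_pos hn hA hx k i)

lemma be_le_al (hn : 0 < n) (k : ℕ) : be A x k ≤ al A x k := by
  haveI : Nonempty (Fin n) := Fin.pos_iff_nonempty.mp hn
  exact le_trans (be_le_ratio k (Classical.arbitrary _)) (ratio_le_al k (Classical.arbitrary _))

lemma al_pos (hn : 0 < n) (hA : ∀ i j, 0 < A i j) (hx : ∀ i, 0 < x i) (k : ℕ) :
    0 < al A x k :=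
  lt_of_lt_of_le (be_pos hn hA hx k) (be_le_al hn k)

lemma al_succ_le (hn : 0 < n) (hA : ∀ i j, 0 < A i j) (hx : ∀ i, 0 < x i) (k : ℕ) :
    al A x (k + 1) ≤ al A x k := by
  haveI : Nonempty (Fin n) := Fin.pos_iff_nonempty.mp hn
  refine ciSup_le fun i => ?_
  rw [div_le_iff₀ (yk_pos hn hA hx (k+1) i)]
  calc yk A x (k + 2) i = ∑ j, A i j * yk A x (k+1) j := by
        rw [yk_succ A x (k+1)]; simp [Matrix.mulVec, dotProduct]
    _ ≤ ∑ j, A i j * (al A x k * yk A x k j) :=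
        Finset.sum_le_sum fun j _ => mul_le_mul_of_nonneg_left (yk_le_al hn hA hx k j) (hA i j).le
    _ = al A x k * yk A x (k + 1) i := by
        rw [yk_succ A x k]; simp only [Matrix.mulVec, dotProduct, Finset.mul_sum]
        exact Finset.sum_congr rfl fun j _ => by ring

lemma be_le_succ (hn : 0 < n) (hA : ∀ i j, 0 < A i j) (hx : ∀ i, 0 < x i) (k : ℕ) :
    be A x k ≤ be A x (k + 1) := by
  haveI : Nonempty (Fin n) := Fin.pos_iff_nonempty.mp hn
  refine le_ciInf fun i => ?_
  rw [le_div_iff₀ (yk_pos hn hA hx (k+1) i)]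
  calc be A x k * yk A x (k + 1) i = ∑ j, A i j * (be A x k * yk A x k j) := by
        rw [yk_succ A x k]; simp only [Matrix.mulVec, dotProduct, Finset.mul_sum]
        exact Finset.sum_congr rfl fun j _ => by ring
    _ ≤ ∑ j, A i j * yk A x (k+1) j :=
        Finset.sum_le_sum fun j _ => mul_le_mul_of_nonneg_left (be_le_yk hn hA hx k j) (hA i j).le
    _ = yk A x (k + 2) i := by
        rw [yk_succ A x (k+1)]; simp [Matrix.mulVec, dotProduct]

lemma al_anti (hn : 0 < n) (hA : ∀ i j, 0 < A i j) (hx : ∀ i, 0 < x i) : Antitone (al A x) :=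
  antitone_nat_of_succ_le (al_succ_le hn hA hx)

lemma be_mono (hn : 0 < n) (hA : ∀ i j, 0 < A i j) (hx : ∀ i, 0 < x i) : Monotone (be A x) :=
  monotone_nat_of_le_succ (be_le_succ hn hA hx)

end Ratios


section Strict
variable {n : ℕ} {A : Matrix (Fin n) (Fin n) ℝ} {x : Fin n → ℝ}

lemma eig_case (hn : 0 < n) (hA : ∀ i j, 0 < A i j) (hx : ∀ i, 0 < x i)
    (hnp : ∀ r : ℕ, ¬ IsPerronVector A ((A ^ r).mulVec x)) (k : ℕ) {lam : ℝ}
    (hlam : 0 < lam) (heq : A.mulVec (yk A x k) = lam • yk A x k) : False := by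
  refine hnp k ⟨?_, ?_⟩
  · intro h0
    have := congrFun h0 ⟨0, hn⟩
    exact (yk_pos hn hA hx k ⟨0, hn⟩).ne' this
  · have hp : perronValue A = lam :=
      perron_eq_of_eig hn hA (yk_pos hn hA hx k) hlam heq
    rw [hp]
    exact heq

lemma al_strict (hn : 0 < n) (hA : ∀ i j, 0 < A i j) (hx : ∀ i, 0 < x i)
    (hnp : ∀ r : ℕ, ¬ IsPerronVector A ((A ^ r).mulVec x)) (k : ℕ) :
    al A x (k + 1) < al A x k := by
  by_cases hE : ∀ j, yk A x (k+1) j = al A x k * yk A x k j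
  · exact (eig_case hn hA hx hnp k (al_pos hn hA hx k)
      (by funext j; rw [← yk_succ A x k, hE j]; simp)).elim
  · push_neg at hE
    obtain ⟨j0, hj0⟩ := hE
    have hj0' : yk A x (k+1) j0 < al A x k * yk A x k j0 :=
      lt_of_le_of_ne (yk_le_al hn hA hx k j0) hj0
    have hstrict : ∀ i, yk A x (k+2) i < al A x k * yk A x (k+1) i := by
      intro i
      calc yk A x (k+2) i = ∑ j, A i j * yk A x (k+1) j := by
            rw [yk_succ A x (k+1)]; simp [Matrix.mulVec, dotProduct]
        _ < ∑ j, A i j * (al A x k * yk A x k j) := by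
            refine Finset.sum_lt_sum
              (fun j _ => mul_le_mul_of_nonneg_left (yk_le_al hn hA hx k j) (hA i j).le)
              ⟨j0, Finset.mem_univ j0, ?_⟩
            exact mul_lt_mul_of_pos_left hj0' (hA i j0)
        _ = al A x k * yk A x (k+1) i := by
            rw [yk_succ A x k]; simp only [Matrix.mulVec, dotProduct, Finset.mul_sum]
            exact Finset.sum_congr rfl fun j _ => by ring
    obtain ⟨i, hi⟩ := al_attained (A := A) (x := x) hn (k+1)
    rw [hi, div_lt_iff₀ (yk_pos hn hA hx (k+1) i)]
    exact hstrict i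

lemma be_strict (hn : 0 < n) (hA : ∀ i j, 0 < A i j) (hx : ∀ i, 0 < x i)
    (hnp : ∀ r : ℕ, ¬ IsPerronVector A ((A ^ r).mulVec x)) (k : ℕ) :
    be A x k < be A x (k + 1) := by
  by_cases hE : ∀ j, yk A x (k+1) j = be A x k * yk A x k j
  · exact (eig_case hn hA hx hnp k (be_pos hn hA hx k)
      (by funext j; rw [← yk_succ A x k, hE j]; simp)).elim
  · push_neg at hE
    obtain ⟨j0, hj0⟩ := hE
    have hj0' : be A x k * yk A x k j0 < yk A x (k+1) j0 :=
      lt_of_le_of_ne (be_le_yk hn hA hx k j0) (Ne.symm hj0)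
    have hstrict : ∀ i, be A x k * yk A x (k+1) i < yk A x (k+2) i := by
      intro i
      calc be A x k * yk A x (k+1) i = ∑ j, A i j * (be A x k * yk A x k j) := by
            rw [yk_succ A x k]; simp only [Matrix.mulVec, dotProduct, Finset.mul_sum]
            exact Finset.sum_congr rfl fun j _ => by ring
        _ < ∑ j, A i j * yk A x (k+1) j := by
            refine Finset.sum_lt_sum
              (fun j _ => mul_le_mul_of_nonneg_left (be_le_yk hn hA hx k j) (hA i j).le)
              ⟨j0, Finset.mem_univ j0, ?_⟩
            exact mul_lt_mul_of_pos_left hj0' (hA i j0)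
        _ = yk A x (k+2) i := by
            rw [yk_succ A x (k+1)]; simp [Matrix.mulVec, dotProduct]
    obtain ⟨i, hi⟩ := be_attained (A := A) (x := x) hn (k+1)
    rw [hi, lt_div_iff₀ (yk_pos hn hA hx (k+1) i)]
    exact hstrict i

end Strict


section Contraction
variable {n : ℕ} (A : Matrix (Fin n) (Fin n) ℝ)

noncomputable def entMin : ℝ := ⨅ p : Fin n × Fin n, A p.1 p.2
noncomputable def entMax : ℝ := ⨆ p : Fin n × Fin n, A p.1 p.2
noncomputable def entC : ℝ := entMin A ^ 2 / (n * entMax A ^ 2)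

variable {A}

lemma em_le (i j : Fin n) : entMin A ≤ A i j :=
  ciInf_le (f := fun p : Fin n × Fin n => A p.1 p.2)
    (Set.Finite.bddBelow (Set.finite_range _)) (i, j)

lemma le_eM (i j : Fin n) : A i j ≤ entMax A :=
  le_ciSup (f := fun p : Fin n × Fin n => A p.1 p.2)
    (Set.Finite.bddAbove (Set.finite_range _)) (i, j)

lemma em_pos (hn : 0 < n) (hA : ∀ i j, 0 < A i j) : 0 < entMin A := by
  haveI : Nonempty (Fin n) := Fin.pos_iff_nonempty.mp hn
  obtain ⟨p0, hp0⟩ := Finite.exists_min (fun p : Fin n × Fin n => A p.1 p.2)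
  have : entMin A = A p0.1 p0.2 := le_antisymm (em_le p0.1 p0.2) (le_ciInf hp0)
  rw [this]; exact hA _ _

lemma em_le_eM (hn : 0 < n) : entMin A ≤ entMax A := by
  haveI : Nonempty (Fin n) := Fin.pos_iff_nonempty.mp hn
  set i : Fin n := Classical.arbitrary _
  exact (em_le i i).trans (le_eM i i)

lemma eM_pos (hn : 0 < n) (hA : ∀ i j, 0 < A i j) : 0 < entMax A :=
  lt_of_lt_of_le (em_pos hn hA) (em_le_eM hn)

lemma ccon_pos (hn : 0 < n) (hA : ∀ i j, 0 < A i j) : 0 < entC A := by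
  have h1 := em_pos hn hA
  have h2 := eM_pos hn hA
  have h3 : (0:ℝ) < n := by exact_mod_cast hn
  rw [entC]
  positivity

lemma ccon_le_one (hn : 0 < n) (hA : ∀ i j, 0 < A i j) : entC A ≤ 1 := by
  have h1 := em_pos hn hA
  have h2 := eM_pos hn hA
  have h3 : (1:ℝ) ≤ n := by exact_mod_cast hn
  rw [entC, div_le_one (by positivity)]
  calc entMin A ^ 2 ≤ entMax A ^ 2 := by
        have := em_le_eM (A := A) hn
        nlinarith
    _ = 1 * entMax A ^ 2 := (one_mul _).symm
    _ ≤ n * entMax A ^ 2 := by nlinarith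

variable {x : Fin n → ℝ}

lemma yk_ratio_bound (hn : 0 < n) (hA : ∀ i j, 0 < A i j) (hx : ∀ i, 0 < x i)
    (k : ℕ) (i j : Fin n) :
    yk A x (k + 1) i ≤ (entMax A / entMin A) * yk A x (k + 1) j := by
  haveI : Nonempty (Fin n) := Fin.pos_iff_nonempty.mp hn
  set S := ∑ t, yk A x k t with hS
  have hSpos : 0 < S := Finset.sum_pos (fun t _ => yk_pos hn hA hx k t) Finset.univ_nonempty
  have h1 : yk A x (k + 1) i ≤ entMax A * S := by
    rw [yk_succ A x k]
    calc (A.mulVec (yk A x k)) i = ∑ t, A i t * yk A x k t := by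
          simp [Matrix.mulVec, dotProduct]
      _ ≤ ∑ t, entMax A * yk A x k t :=
          Finset.sum_le_sum fun t _ =>
            mul_le_mul_of_nonneg_right (le_eM i t) (yk_pos hn hA hx k t).le
      _ = entMax A * S := by rw [hS, Finset.mul_sum]
  have h2 : entMin A * S ≤ yk A x (k + 1) j := by
    rw [yk_succ A x k]
    calc entMin A * S = ∑ t, entMin A * yk A x k t := by rw [hS, Finset.mul_sum]
      _ ≤ ∑ t, A j t * yk A x k t :=
          Finset.sum_le_sum fun t _ =>
            mul_le_mul_of_nonneg_right (em_le j t) (yk_pos hn hA hx k t).le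
      _ = (A.mulVec (yk A x k)) j := by simp [Matrix.mulVec, dotProduct]
  have hem := em_pos hn hA
  calc yk A x (k + 1) i ≤ entMax A * S := h1
    _ = (entMax A / entMin A) * (entMin A * S) := by field_simp
    _ ≤ (entMax A / entMin A) * yk A x (k + 1) j :=
        mul_le_mul_of_nonneg_left h2 (div_nonneg (eM_pos hn hA).le (em_pos hn hA).le)

lemma contraction (hn : 0 < n) (hA : ∀ i j, 0 < A i j) (hx : ∀ i, 0 < x i) (k : ℕ) :
    al A x (k + 2) ≤ al A x (k + 1) - entC A * (al A x (k + 1) - be A x (k + 1)) := by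
  haveI : Nonempty (Fin n) := Fin.pos_iff_nonempty.mp hn
  have hem := em_pos hn hA
  have heM := eM_pos hn hA
  have hnR : (0:ℝ) < n := by exact_mod_cast hn
  set a := al A x (k + 1) with ha
  set b := be A x (k + 1) with hb
  have hab : b ≤ a := be_le_al hn (k + 1)
  obtain ⟨j1, hj1⟩ := be_attained (A := A) (x := x) hn (k + 1)
  have hzj1 : yk A x (k + 2) j1 = b * yk A x (k + 1) j1 := by
    rw [hb, hj1, div_mul_cancel₀]
    exact (yk_pos hn hA hx (k + 1) j1).ne'
  -- bound z i in terms of y j1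
  have hzy : ∀ i, yk A x (k + 2) i ≤ (n * entMax A ^ 2 / entMin A) * yk A x (k + 1) j1 := by
    intro i
    calc yk A x (k + 2) i = ∑ t, A i t * yk A x (k + 1) t := by
          rw [yk_succ A x (k + 1)]; simp [Matrix.mulVec, dotProduct]
      _ ≤ ∑ t, entMax A * ((entMax A / entMin A) * yk A x (k + 1) j1) :=
          Finset.sum_le_sum fun t _ => by
            have h1 : A i t * yk A x (k + 1) t ≤ entMax A * yk A x (k + 1) t :=
              mul_le_mul_of_nonneg_right (le_eM i t) (yk_pos hn hA hx (k + 1) t).le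
            have h2 : yk A x (k + 1) t ≤ (entMax A / entMin A) * yk A x (k + 1) j1 :=
              yk_ratio_bound hn hA hx k t j1
            exact h1.trans (mul_le_mul_of_nonneg_left h2 heM.le)
      _ = (n * entMax A ^ 2 / entMin A) * yk A x (k + 1) j1 := by
          rw [Finset.sum_const, Finset.card_univ, Fintype.card_fin]
          push_cast
          rw [nsmul_eq_mul]
          field_simp
  have hkey : ∀ i, yk A x (k + 3) i ≤ (a - entC A * (a - b)) * yk A x (k + 2) i := by
    intro i
    have hstep1 : yk A x (k + 3) i =
        ∑ j, A i j * (a * yk A x (k + 1) j) - ∑ j, A i j * (a * yk A x (k + 1) j - yk A x (k + 2) j) := by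
      rw [← Finset.sum_sub_distrib]
      rw [yk_succ A x (k + 2)]
      simp only [Matrix.mulVec, dotProduct]
      exact Finset.sum_congr rfl fun j _ => by ring
    have hstep2 : A i j1 * (a * yk A x (k + 1) j1 - yk A x (k + 2) j1) ≤
        ∑ j, A i j * (a * yk A x (k + 1) j - yk A x (k + 2) j) := by
      refine Finset.single_le_sum (f := fun j => A i j * (a * yk A x (k + 1) j - yk A x (k + 2) j))
        (fun j _ => ?_) (Finset.mem_univ j1)
      have := yk_le_al hn hA hx (k + 1) j
      exact mul_nonneg (hA i j).le (by rw [ha]; linarith)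
    have hsum_a : ∑ j, A i j * (a * yk A x (k + 1) j) = a * yk A x (k + 2) i := by
      rw [yk_succ A x (k + 1)]
      simp only [Matrix.mulVec, dotProduct, Finset.mul_sum]
      exact Finset.sum_congr rfl fun j _ => by ring
    have hterm : entC A * (a - b) * yk A x (k + 2) i ≤
        A i j1 * (a * yk A x (k + 1) j1 - yk A x (k + 2) j1) := by
      rw [hzj1]
      have h4 : A i j1 * (a * yk A x (k + 1) j1 - b * yk A x (k + 1) j1) =
          A i j1 * (a - b) * yk A x (k + 1) j1 := by ring
      rw [h4]
      have h5 : entMin A * (a - b) * yk A x (k + 1) j1 ≤ A i j1 * (a - b) * yk A x (k + 1) j1 := by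
        have hy1 := yk_pos hn hA hx (k + 1) j1
        have hh : 0 ≤ (A i j1 - entMin A) * ((a - b) * yk A x (k + 1) j1) :=
          mul_nonneg (sub_nonneg.mpr (em_le (A := A) i j1))
            (mul_nonneg (sub_nonneg.mpr hab) hy1.le)
        nlinarith [hh]
      refine le_trans ?_ h5
      have h6 : entC A * yk A x (k + 2) i ≤ entMin A * yk A x (k + 1) j1 := by
        have h7 := hzy i
        have h8 : entC A * ((n * entMax A ^ 2 / entMin A) * yk A x (k + 1) j1) = entMin A * yk A x (k + 1) j1 := by
          rw [entC]
          field_simp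
        calc entC A * yk A x (k + 2) i ≤ entC A * ((n * entMax A ^ 2 / entMin A) * yk A x (k + 1) j1) :=
              mul_le_mul_of_nonneg_left h7 (ccon_pos hn hA).le
          _ = entMin A * yk A x (k + 1) j1 := h8
      nlinarith [h6, yk_pos hn hA hx (k + 2) i, yk_pos hn hA hx (k + 1) j1]
    calc yk A x (k + 3) i
        = ∑ j, A i j * (a * yk A x (k + 1) j) - ∑ j, A i j * (a * yk A x (k + 1) j - yk A x (k + 2) j) := hstep1
      _ ≤ a * yk A x (k + 2) i - A i j1 * (a * yk A x (k + 1) j1 - yk A x (k + 2) j1) := by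
          rw [hsum_a]; linarith [hstep2]
      _ ≤ a * yk A x (k + 2) i - entC A * (a - b) * yk A x (k + 2) i := by linarith [hterm]
      _ = (a - entC A * (a - b)) * yk A x (k + 2) i := by ring
  refine ciSup_le fun i => ?_
  rw [div_le_iff₀ (yk_pos hn hA hx (k + 2) i)]
  exact hkey i

end Contraction


section Limits
variable {n : ℕ} {A : Matrix (Fin n) (Fin n) ℝ} {x : Fin n → ℝ}

lemma diff_contraction (hn : 0 < n) (hA : ∀ i j, 0 < A i j) (hx : ∀ i, 0 < x i) (k : ℕ) :
    al A x (k + 2) - be A x (k + 2) ≤ (1 - entC A) * (al A x (k + 1) - be A x (k + 1)) := by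
  have h1 := contraction hn hA hx k
  have h2 := be_le_succ hn hA hx (k + 1)
  calc al A x (k + 2) - be A x (k + 2)
      ≤ (al A x (k + 1) - entC A * (al A x (k + 1) - be A x (k + 1))) - be A x (k + 1) := by
        linarith
    _ = (1 - entC A) * (al A x (k + 1) - be A x (k + 1)) := by ring

lemma diff_geom (hn : 0 < n) (hA : ∀ i j, 0 < A i j) (hx : ∀ i, 0 < x i) (j : ℕ) :
    al A x (j + 1) - be A x (j + 1) ≤ (1 - entC A) ^ j * (al A x 1 - be A x 1) := by
  induction j with
  | zero => simp
  | succ j ih =>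
    have h1 := diff_contraction hn hA hx j
    have h2 : (0:ℝ) ≤ 1 - entC A := by linarith [ccon_le_one hn hA]
    calc al A x (j + 2) - be A x (j + 2) ≤ (1 - entC A) * (al A x (j + 1) - be A x (j + 1)) := h1
      _ ≤ (1 - entC A) * ((1 - entC A) ^ j * (al A x 1 - be A x 1)) :=
          mul_le_mul_of_nonneg_left ih h2
      _ = (1 - entC A) ^ (j + 1) * (al A x 1 - be A x 1) := by ring

lemma tendsto_diff (hn : 0 < n) (hA : ∀ i j, 0 < A i j) (hx : ∀ i, 0 < x i) :
    Tendsto (fun k => al A x k - be A x k) atTop (nhds 0) := by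
  have h2 : (0:ℝ) ≤ 1 - entC A := by linarith [ccon_le_one hn hA]
  have h3 : 1 - entC A < 1 := by linarith [ccon_pos hn hA]
  have hgeom : Tendsto (fun j : ℕ => (1 - entC A) ^ j * (al A x 1 - be A x 1)) atTop (nhds 0) := by
    have := (tendsto_pow_atTop_nhds_zero_of_lt_one h2 h3).mul_const (al A x 1 - be A x 1)
    simpa using this
  have hcomp : Tendsto (fun k : ℕ => (1 - entC A) ^ (k - 1) * (al A x 1 - be A x 1)) atTop (nhds 0) :=
    hgeom.comp (tendsto_sub_atTop_nat 1)
  refine squeeze_zero' ?_ ?_ hcomp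
  · filter_upwards with k
    linarith [be_le_al (A := A) (x := x) hn k]
  · filter_upwards [eventually_ge_atTop 1] with k hk
    obtain ⟨j, rfl⟩ := Nat.exists_eq_add_of_le hk
    have e : 1 + j = j + 1 := by omega
    rw [e]
    simpa using diff_geom hn hA hx j

lemma bdd_below_al (hn : 0 < n) (hA : ∀ i j, 0 < A i j) (hx : ∀ i, 0 < x i) :
    BddBelow (Set.range (al A x)) := by
  refine ⟨be A x 0, ?_⟩
  rintro r ⟨k, rfl⟩
  exact le_trans (be_mono hn hA hx (Nat.zero_le k)) (be_le_al hn k)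

lemma tendsto_al_inf (hn : 0 < n) (hA : ∀ i j, 0 < A i j) (hx : ∀ i, 0 < x i) :
    Tendsto (al A x) atTop (nhds (⨅ k, al A x k)) :=
  tendsto_atTop_ciInf (al_anti hn hA hx) (bdd_below_al hn hA hx)

lemma be_le_inf (hn : 0 < n) (hA : ∀ i j, 0 < A i j) (hx : ∀ i, 0 < x i) (k : ℕ) :
    be A x k ≤ ⨅ j, al A x j := by
  refine le_ciInf fun j => ?_
  rcases le_total k j with h | h
  · exact le_trans (be_mono hn hA hx h) (be_le_al hn j)
  · exact le_trans (be_le_al hn k) (al_anti hn hA hx h)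

lemma perron_le_al (hn : 0 < n) (hA : ∀ i j, 0 < A i j) (hx : ∀ i, 0 < x i) (k : ℕ) :
    perronValue A ≤ al A x k := by
  refine perron_le hn hA (yk_pos hn hA hx k) fun i => ?_
  rw [← yk_succ A x k]
  exact yk_le_al hn hA hx k i

lemma perron_eq_inf_al (hn : 0 < n) (hA : ∀ i j, 0 < A i j) (hx : ∀ i, 0 < x i) :
    perronValue A = ⨅ k, al A x k := by
  haveI : Nonempty (Fin n) := Fin.pos_iff_nonempty.mp hn
  set L := ⨅ k, al A x k with hL
  refine le_antisymm (le_ciInf (perron_le_al hn hA hx)) ?_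
  -- construct a nonnegative eigenvector for L via compactness
  have tendsto_al := tendsto_al_inf hn hA hx
  have tendsto_be : Tendsto (be A x) atTop (nhds L) := by
    have := tendsto_al.sub (tendsto_diff hn hA hx)
    simpa using this
  set S : ℕ → ℝ := fun k => ∑ i, yk A x k i with hSdef
  have hSpos : ∀ k, 0 < S k := fun k =>
    Finset.sum_pos (fun t _ => yk_pos hn hA hx k t) Finset.univ_nonempty
  set u : ℕ → Fin n → ℝ := fun k i => yk A x k i / S k with hudef
  have hu01 : ∀ k, u k ∈ Set.univ.pi fun _ : Fin n => Set.Icc (0:ℝ) 1 := by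
    intro k i _
    constructor
    · exact div_nonneg (yk_pos hn hA hx k i).le (hSpos k).le
    · rw [div_le_one (hSpos k)]
      exact Finset.single_le_sum (fun t _ => (yk_pos hn hA hx k t).le) (Finset.mem_univ i)
  obtain ⟨v, hvmem, φ, hφ, hconv⟩ :=
    (isCompact_univ_pi fun _ : Fin n => isCompact_Icc).tendsto_subseq hu01
  have hconv_i : ∀ i, Tendsto (fun j => u (φ j) i) atTop (nhds (v i)) := fun i =>
    tendsto_pi_nhds.mp hconv i
  have hsum1 : ∀ k, ∑ i, u k i = 1 := by
    intro k
    rw [hudef]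
    rw [← Finset.sum_div]
    exact div_self (hSpos k).ne'
  have hsumv : ∑ i, v i = 1 := by
    have h1 : Tendsto (fun j => ∑ i, u (φ j) i) atTop (nhds (∑ i, v i)) :=
      tendsto_finset_sum _ fun i _ => hconv_i i
    have h2 : Tendsto (fun j => ∑ i, u (φ j) i) atTop (nhds 1) := by
      simp only [hsum1]
      exact tendsto_const_nhds
    exact tendsto_nhds_unique h1 h2
  have humul : ∀ k i, A.mulVec (u k) i = yk A x (k + 1) i / S k := by
    intro k i
    rw [yk_succ A x k]
    simp only [hudef, Matrix.mulVec, dotProduct]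
    rw [eq_div_iff (hSpos k).ne', Finset.sum_mul]
    refine Finset.sum_congr rfl fun t _ => ?_
    rw [mul_assoc, div_mul_cancel₀ _ (hSpos k).ne']
  have hineq1 : ∀ k i, be A x k * u k i ≤ A.mulVec (u k) i := by
    intro k i
    rw [humul, hudef]
    simp only [mul_div_assoc']
    gcongr
    · exact (hSpos k).le
    · exact be_le_yk hn hA hx k i
  have hineq2 : ∀ k i, A.mulVec (u k) i ≤ al A x k * u k i := by
    intro k i
    rw [humul, hudef]
    simp only [mul_div_assoc']
    gcongr
    · exact (hSpos k).le
    · exact yk_le_al hn hA hx k i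
  have heig : A.mulVec v = L • v := by
    funext i
    have hA_tendsto : Tendsto (fun j => A.mulVec (u (φ j)) i) atTop (nhds (A.mulVec v i)) := by
      have : ∀ w : Fin n → ℝ, A.mulVec w i = ∑ t, A i t * w t := fun w => by
        simp [Matrix.mulVec, dotProduct]
      simp only [this]
      exact tendsto_finset_sum _ fun t _ => (hconv_i t).const_mul _
    have hbe_t : Tendsto (fun j => be A x (φ j) * u (φ j) i) atTop (nhds (L * v i)) :=
      (tendsto_be.comp hφ.tendsto_atTop).mul (hconv_i i)
    have hal_t : Tendsto (fun j => al A x (φ j) * u (φ j) i) atTop (nhds (L * v i)) := by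
      have := ((hL ▸ tendsto_al).comp hφ.tendsto_atTop).mul (hconv_i i)
      exact this
    have h1 : L * v i ≤ A.mulVec v i :=
      le_of_tendsto_of_tendsto' hbe_t hA_tendsto fun j => hineq1 (φ j) i
    have h2 : A.mulVec v i ≤ L * v i :=
      le_of_tendsto_of_tendsto' hA_tendsto hal_t fun j => hineq2 (φ j) i
    simpa using le_antisymm h2 h1
  -- L is a root of the complex charpoly
  have hLpos : 0 < L := lt_of_lt_of_le (be_pos hn hA hx 0) (be_le_inf hn hA hx 0)
  have hv0 : v ≠ 0 := by
    intro h
    rw [h] at hsumv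
    simp at hsumv
  have hroot : ((A.map Complex.ofReal).charpoly).IsRoot (L : ℂ) := by
    rw [isRoot_charpoly_iff]
    refine ⟨fun i => (v i : ℂ), ?_, ?_⟩
    · intro h
      apply hv0
      funext i
      have := congrFun h i
      simpa using this
    · funext i
      rw [mulVec_map_ofReal]
      have := congrFun heig i
      simp only [Pi.smul_apply, smul_eq_mul] at this ⊢
      rw [this]
      push_cast
      ring
  have hmem : L ∈ {r : ℝ | ∃ μ : ℂ, ((A.map Complex.ofReal).charpoly).IsRoot μ ∧ r = ‖μ‖} :=
    ⟨(L : ℂ), hroot, by simp [Complex.norm_real, abs_of_pos hLpos]⟩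
  have hbdd : BddAbove {r : ℝ | ∃ μ : ℂ, ((A.map Complex.ofReal).charpoly).IsRoot μ ∧ r = ‖μ‖} := by
    refine ⟨al A x 0, ?_⟩
    rintro r ⟨μ, hμ, rfl⟩
    refine abs_root_le hA (yk_pos hn hA hx 0) (fun i => ?_) hμ
    rw [← yk_succ A x 0]
    exact yk_le_al hn hA hx 0 i
  exact le_csSup hbdd hmem

end Limits

/-- Let `A` be an `n × n` entrywise positive real matrix and `x` entrywise
positive. If `A^r x` is not a Perron vector of `A` for every `r ≥ 0`, then `(a_k(A,x))_{k≥1}`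
is strictly decreasing, `(b_k(A,x))_{k≥1}` is strictly increasing, and both sequences
converge to the Perron value `ρ(A)`. -/
theorem aSeq_strictAnti_bSeq_strictMono_tendsto_perron {n : ℕ} (hn : 0 < n)
    (A : Matrix (Fin n) (Fin n) ℝ) (x : Fin n → ℝ)
    (hA : ∀ i j, 0 < A i j) (hx : ∀ i, 0 < x i)
    (hnp : ∀ r : ℕ, ¬ IsPerronVector A ((A ^ r).mulVec x)) :
    (∀ k : ℕ, 1 ≤ k → aSeq A x (k + 1) < aSeq A x k) ∧
    (∀ k : ℕ, 1 ≤ k → bSeq A x k < bSeq A x (k + 1)) ∧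
    Tendsto (fun k : ℕ => aSeq A x k) atTop (nhds (perronValue A)) ∧
    Tendsto (fun k : ℕ => bSeq A x k) atTop (nhds (perronValue A)) := by
  have haeq : ∀ k : ℕ, aSeq A x (k + 1) = al A x k := by
    intro k
    simp only [aSeq, al, yk, Nat.add_sub_cancel]
  have hbeq : ∀ k : ℕ, bSeq A x (k + 1) = be A x k := by
    intro k
    simp only [bSeq, be, yk, Nat.add_sub_cancel]
  have hperron := perron_eq_inf_al hn hA hx
  have htal : Tendsto (al A x) atTop (nhds (perronValue A)) := by
    rw [hperron]; exact tendsto_al_inf hn hA hx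
  have htbe : Tendsto (be A x) atTop (nhds (perronValue A)) := by
    have := htal.sub (tendsto_diff hn hA hx)
    simpa using this
  refine ⟨?_, ?_, ?_, ?_⟩
  · intro k hk
    obtain ⟨m, rfl⟩ := Nat.exists_eq_add_of_le hk
    have e1 : 1 + m + 1 = (m + 1) + 1 := by omega
    have e2 : 1 + m = m + 1 := by omega
    rw [e1, e2, haeq, haeq]
    exact al_strict hn hA hx hnp m
  · intro k hk
    obtain ⟨m, rfl⟩ := Nat.exists_eq_add_of_le hk
    have e1 : 1 + m + 1 = (m + 1) + 1 := by omega
    have e2 : 1 + m = m + 1 := by omega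
    rw [e1, e2, hbeq, hbeq]
    exact be_strict hn hA hx hnp m
  · have hcomp : Tendsto (fun k : ℕ => al A x (k - 1)) atTop (nhds (perronValue A)) :=
      htal.comp (tendsto_sub_atTop_nat 1)
    refine hcomp.congr' ?_
    filter_upwards [eventually_ge_atTop 1] with k hk
    obtain ⟨m, rfl⟩ := Nat.exists_eq_add_of_le hk
    have e2 : 1 + m = m + 1 := by omega
    rw [e2]
    simp only [Nat.add_sub_cancel]
    exact (haeq m).symm
  · have hcomp : Tendsto (fun k : ℕ => be A x (k - 1)) atTop (nhds (perronValue A)) :=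
      htbe.comp (tendsto_sub_atTop_nat 1)
    refine hcomp.congr' ?_
    filter_upwards [eventually_ge_atTop 1] with k hk
    obtain ⟨m, rfl⟩ := Nat.exists_eq_add_of_le hk
    have e2 : 1 + m = m + 1 := by omega
    rw [e2]
    simp only [Nat.add_sub_cancel]
    exact (hbeq m).symm
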